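/- For all x ≥ 0, α > 0, β_n ≥ 1, φ, ψ ≥ 0: RL_n^{[α]}(t²; x) = (1 + 3φ + 3φ² + 6xβ_n + 6xφβ_n + 3αxβ_n² + 3x²β_n²) / (3(ψ + β_n)²). -/

import Mathlib

open intervalIntegral

noncomputable def rlcc (r : ℝ) (i : ℕ) : ℝ :=
  (∏ j ∈ Finset.range i, (r + (j : ℝ))) / (i.factorial : ℝ)

lemma rlcc_zero (r : ℝ) : rlcc r 0 = 1 := by simp [rlcc]

lemma rlcc_nonneg {r : ℝ} (hr : 0 ≤ r) (i : ℕ) : 0 ≤ rlcc r i := by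
  apply div_nonneg
  · exact Finset.prod_nonneg fun j _ => by positivity
  · positivity

lemma rlcc_succ (r : ℝ) (k : ℕ) : ((k : ℝ) + 1) * rlcc r (k + 1) = (r + k) * rlcc r k := by
  have hk : ((k.factorial : ℕ) : ℝ) ≠ 0 := by positivity
  simp only [rlcc, Finset.prod_range_succ, Nat.factorial_succ]
  push_cast
  field_simp

lemma rlcc_succ' (r : ℝ) (k : ℕ) : ((k : ℝ) + 1) * rlcc r (k + 1) = r * rlcc (r + 1) k := by
  have hk : ((k.factorial : ℕ) : ℝ) ≠ 0 := by positivity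
  simp only [rlcc, Finset.prod_range_succ', Nat.factorial_succ]
  push_cast
  rw [show (∏ x ∈ Finset.range k, (r + ((x : ℝ) + 1))) = ∏ x ∈ Finset.range k, ((r + 1) + (x : ℝ))
    from Finset.prod_congr rfl fun x _ => by ring]
  field_simp
  ring

lemma rl_summable1 {r : ℝ} (hr : 0 ≤ r) {z : ℝ} (hz : |z| < 1) :
    Summable fun n : ℕ => (n : ℝ) * rlcc r n * z ^ n := by
  set t : ℝ := (1 + |z|) / 2 with ht
  have hzt : |z| < t := by rw [ht]; linarith [abs_nonneg z]
  have ht1 : t < 1 := by rw [ht]; linarith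
  have ht0 : 0 < t := by rw [ht]; positivity
  obtain ⟨N, hN⟩ := exists_nat_gt (r * |z| / (t - |z|))
  apply summable_of_ratio_norm_eventually_le ht1
  filter_upwards [Filter.eventually_ge_atTop N] with n hn
  have hNn : r * |z| < (n : ℝ) * (t - |z|) := by
    have h2 : (0:ℝ) < t - |z| := by linarith
    have h1 : r * |z| / (t - |z|) < (n : ℝ) := lt_of_lt_of_le hN (by exact_mod_cast hn)
    calc r * |z| = r * |z| / (t - |z|) * (t - |z|) := by field_simp
    _ < (n : ℝ) * (t - |z|) := mul_lt_mul_of_pos_right h1 h2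
  have hcc := rlcc_nonneg hr n
  have hrn : (0:ℝ) ≤ r + (n : ℝ) := add_nonneg hr (Nat.cast_nonneg n)
  have e1 : ((n + 1 : ℕ) : ℝ) * rlcc r (n+1) * z ^ (n+1)
      = ((r + (n:ℝ)) * rlcc r n) * (z ^ n * z) := by
    push_cast
    rw [pow_succ, rlcc_succ]
  rw [Real.norm_eq_abs, Real.norm_eq_abs, e1]
  simp only [abs_mul, abs_pow, Nat.abs_cast, abs_of_nonneg hrn, abs_of_nonneg hcc]
  have hp : (0:ℝ) ≤ |z| ^ n := by positivity
  nlinarith [mul_nonneg hcc hp, abs_nonneg z]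

lemma rl_summable0 {r : ℝ} (hr : 0 ≤ r) {z : ℝ} (hz : |z| < 1) :
    Summable fun n : ℕ => rlcc r n * z ^ n := by
  set t : ℝ := (1 + |z|) / 2 with ht
  have hzt : |z| < t := by rw [ht]; linarith [abs_nonneg z]
  have ht1 : t < 1 := by rw [ht]; linarith
  have ht0 : 0 < t := by rw [ht]; positivity
  obtain ⟨N, hN⟩ := exists_nat_gt (r * |z| / (t - |z|))
  apply summable_of_ratio_norm_eventually_le ht1
  filter_upwards [Filter.eventually_ge_atTop N] with n hn
  have hNn : r * |z| < (n : ℝ) * (t - |z|) := by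
    have h2 : (0:ℝ) < t - |z| := by linarith
    have h1 : r * |z| / (t - |z|) < (n : ℝ) := lt_of_lt_of_le hN (by exact_mod_cast hn)
    calc r * |z| = r * |z| / (t - |z|) * (t - |z|) := by field_simp
    _ < (n : ℝ) * (t - |z|) := mul_lt_mul_of_pos_right h1 h2
  have hcc := rlcc_nonneg hr n
  have hrn : (0:ℝ) ≤ r + (n : ℝ) := add_nonneg hr (Nat.cast_nonneg n)
  have hn1 : (0:ℝ) < (n : ℝ) + 1 := by positivity
  have e0 : rlcc r (n+1) = (r + (n:ℝ)) * rlcc r n / ((n:ℝ) + 1) := by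
    rw [eq_div_iff hn1.ne']
    linear_combination rlcc_succ r n
  have e1 : rlcc r (n+1) * z ^ (n+1)
      = ((r + (n:ℝ)) * rlcc r n / ((n:ℝ) + 1)) * (z ^ n * z) := by
    rw [pow_succ, e0]
  rw [Real.norm_eq_abs, Real.norm_eq_abs, e1]
  simp only [abs_mul, abs_div, abs_pow, Nat.abs_cast, abs_of_nonneg hrn, abs_of_nonneg hcc,
    abs_of_nonneg hn1.le]
  have hp : (0:ℝ) ≤ |z| ^ n := by positivity
  rw [div_mul_eq_mul_div, div_le_iff₀ hn1]
  nlinarith [mul_nonneg hcc hp, abs_nonneg z]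

lemma rl_summable_u {r : ℝ} (hr : 0 ≤ r) {s : ℝ} (h0 : 0 < s) (h1 : s < 1) :
    Summable fun n : ℕ => rlcc r n * ((n : ℝ) * s ^ (n - 1)) := by
  have habs : |s| < 1 := by rw [abs_of_pos h0]; exact h1
  have h := (rl_summable1 hr habs).mul_left s⁻¹
  apply h.congr
  intro n
  cases n with
  | zero => simp
  | succ k =>
    rw [Nat.add_sub_cancel, pow_succ]
    push_cast
    field_simp

lemma rl_deriv_bound {r : ℝ} (hr : 0 ≤ r) {y s : ℝ} (hys : |y| ≤ s) (n : ℕ) :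
    ‖rlcc r n * ((n : ℝ) * y ^ (n - 1))‖ ≤ rlcc r n * ((n : ℝ) * s ^ (n - 1)) := by
  rw [Real.norm_eq_abs]
  simp only [abs_mul, abs_pow, Nat.abs_cast, abs_of_nonneg (rlcc_nonneg hr n)]
  exact mul_le_mul_of_nonneg_left
    (mul_le_mul_of_nonneg_left (pow_le_pow_left₀ (abs_nonneg y) hys _) (Nat.cast_nonneg n))
    (rlcc_nonneg hr n)

lemma rl_hasDerivAt {r : ℝ} (hr : 0 ≤ r) {y : ℝ} (hy : |y| < 1) :
    HasDerivAt (fun w : ℝ => ∑' n : ℕ, rlcc r n * w ^ n)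
      (∑' n : ℕ, rlcc r n * ((n : ℝ) * y ^ (n - 1))) y := by
  set s : ℝ := (1 + |y|) / 2 with hs
  have hys : |y| < s := by rw [hs]; linarith [abs_nonneg y]
  have hs0 : 0 < s := by rw [hs]; positivity
  have hs1 : s < 1 := by rw [hs]; linarith
  have hu := rl_summable_u hr hs0 hs1
  refine hasDerivAt_tsum_of_isPreconnected hu (isOpen_Ioo (a := -s) (b := s))
    isPreconnected_Ioo (g := fun n w => rlcc r n * w ^ n)
    (g' := fun n w => rlcc r n * ((n : ℝ) * w ^ (n - 1))) (y₀ := 0)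
    (fun n w _ => (hasDerivAt_pow n w).const_mul _)
    (fun n w hw => rl_deriv_bound hr (abs_le.mpr ⟨hw.1.le, hw.2.le⟩) n)
    (Set.mem_Ioo.mpr ⟨by linarith, hs0⟩) ?_ (Set.mem_Ioo.mpr ⟨(abs_lt.mp hys).1, (abs_lt.mp hys).2⟩)
  apply summable_of_ne_finset_zero (s := {0})
  intro n hn
  simp only [Finset.mem_singleton] at hn
  simp [zero_pow hn]

lemma rl_ode {r : ℝ} (hr : 0 ≤ r) {y : ℝ} (hy : |y| < 1) :
    (1 - y) * (∑' n : ℕ, rlcc r n * ((n : ℝ) * y ^ (n - 1)))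
      = r * ∑' n : ℕ, rlcc r n * y ^ n := by
  set s : ℝ := (1 + |y|) / 2 with hs
  have hys : |y| < s := by rw [hs]; linarith [abs_nonneg y]
  have hs0 : 0 < s := by rw [hs]; positivity
  have hs1 : s < 1 := by rw [hs]; linarith
  have hsum_h : Summable fun n : ℕ => rlcc r n * ((n : ℝ) * y ^ (n - 1)) :=
    (rl_summable_u hr hs0 hs1).of_norm_bounded (fun n => rl_deriv_bound hr hys.le n)
  have hsum_f : Summable fun n : ℕ => rlcc r n * y ^ n := rl_summable0 hr hy
  have h0 : (fun k : ℕ => rlcc r (k+1) * (((k+1 : ℕ) : ℝ) * y ^ ((k+1) - 1)))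
      = fun k : ℕ => r * (rlcc r k * y ^ k) + y * (rlcc r k * ((k : ℝ) * y ^ (k - 1))) := by
    funext k
    have h1 : ((k:ℝ)+1) * rlcc r (k+1) = (r + k) * rlcc r k := rlcc_succ r k
    have h2 : (k:ℝ) * y ^ (k-1) * y = (k:ℝ) * y ^ k := by
      cases k with
      | zero => simp
      | succ m => rw [Nat.add_sub_cancel, mul_assoc, ← pow_succ]
    rw [Nat.add_sub_cancel]
    push_cast
    linear_combination y ^ k * h1 - rlcc r k * h2
  have e1 : (∑' n : ℕ, rlcc r n * ((n : ℝ) * y ^ (n - 1)))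
      = r * (∑' n : ℕ, rlcc r n * y ^ n)
        + y * (∑' n : ℕ, rlcc r n * ((n : ℝ) * y ^ (n - 1))) := by
    conv_lhs => rw [Summable.tsum_eq_zero_add hsum_h]
    simp only [Nat.cast_zero, zero_mul, mul_zero, zero_add]
    rw [h0, Summable.tsum_add (hsum_f.mul_left r) (hsum_h.mul_left y), tsum_mul_left, tsum_mul_left]
  linear_combination e1

lemma rl_hasSum {r : ℝ} (hr : 0 ≤ r) {z : ℝ} (hz0 : 0 ≤ z) (hz1 : z < 1) :
    HasSum (fun n : ℕ => rlcc r n * z ^ n) ((1 - z) ^ (-r)) := by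
  have hsf : Summable fun n : ℕ => rlcc r n * z ^ n :=
    rl_summable0 hr (by rwa [abs_of_nonneg hz0])
  suffices hFz : (∑' n : ℕ, rlcc r n * z ^ n) = (1 - z) ^ (-r) by
    exact hFz ▸ hsf.hasSum
  have hG : ∀ y ∈ Set.Icc (0:ℝ) z,
      HasDerivAt (fun y : ℝ => (∑' n : ℕ, rlcc r n * y ^ n) * (1 - y) ^ r) 0 y := by
    intro y hy
    have hy1 : |y| < 1 := by rw [abs_of_nonneg hy.1]; linarith [hy.2]
    have h1y : (0:ℝ) < 1 - y := by have := hy.2; linarith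
    have hF := rl_hasDerivAt hr hy1
    have hP : HasDerivAt (fun w : ℝ => (1 - w) ^ r) ((-1) * r * (1-y) ^ (r-1)) y :=
      ((hasDerivAt_id y).const_sub 1).rpow_const (Or.inl h1y.ne')
    have hpow : (1 - y) ^ r = (1 - y) ^ (r - 1) * (1 - y) := by
      have h := Real.rpow_add_one h1y.ne' (r - 1)
      rwa [sub_add_cancel] at h
    have hval : (∑' n : ℕ, rlcc r n * ((n:ℝ) * y ^ (n-1))) * (1-y) ^ r
        + (∑' n : ℕ, rlcc r n * y ^ n) * ((-1) * r * (1-y) ^ (r-1)) = 0 := by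
      rw [hpow]
      linear_combination (1-y) ^ (r-1) * rl_ode hr hy1
    exact hval ▸ hF.mul hP
  have key := constant_of_has_deriv_right_zero
    (f := fun y : ℝ => (∑' n : ℕ, rlcc r n * y ^ n) * (1 - y) ^ r) (a := 0) (b := z)
    (fun y hy => (hG y hy).continuousAt.continuousWithinAt)
    (fun y hy => (hG y (Set.mem_Icc_of_Ico hy)).hasDerivWithinAt)
    z ⟨hz0, le_rfl⟩
  have hF0 : (∑' n : ℕ, rlcc r n * (0:ℝ) ^ n) = 1 := by
    rw [tsum_eq_single 0 (fun n hn => by simp [zero_pow hn])]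
    simp [rlcc_zero]
  simp only [hF0, sub_zero, Real.one_rpow, one_mul] at key
  have hpos : (0:ℝ) < 1 - z := by linarith
  have hq : (1 - z) ^ r ≠ 0 := (Real.rpow_pos_of_pos hpos r).ne'
  rw [Real.rpow_neg hpos.le]
  field_simp
  linarith [key]

lemma rl_hasSum1 {r : ℝ} (hr : 0 ≤ r) {z : ℝ} (hz0 : 0 ≤ z) (hz1 : z < 1) :
    HasSum (fun n : ℕ => (n : ℝ) * (rlcc r n * z ^ n)) (r * z * (1 - z) ^ (-(r+1))) := by
  have h := (rl_hasSum (by linarith : (0:ℝ) ≤ r + 1) hz0 hz1).mul_left (r * z)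
  have he : (fun k : ℕ => r * z * (rlcc (r+1) k * z ^ k))
      = fun k : ℕ => ((k+1 : ℕ) : ℝ) * (rlcc r (k+1) * z ^ (k+1)) := by
    funext k
    have h1 := rlcc_succ' r k
    push_cast
    rw [pow_succ]
    linear_combination (-(z ^ k * z)) * h1
  rw [he] at h
  have h2 := (hasSum_nat_add_iff (f := fun n : ℕ => (n:ℝ) * (rlcc r n * z ^ n)) 1).mp h
  simpa using h2

lemma rl_hasSum2 {r : ℝ} (hr : 0 ≤ r) {z : ℝ} (hz0 : 0 ≤ z) (hz1 : z < 1) :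
    HasSum (fun n : ℕ => (n : ℝ) * ((n : ℝ) - 1) * (rlcc r n * z ^ n))
      (r * (r+1) * z ^ 2 * (1 - z) ^ (-(r+2))) := by
  have h := (rl_hasSum (by linarith : (0:ℝ) ≤ r + 2) hz0 hz1).mul_left (r * (r+1) * z ^ 2)
  have he : (fun k : ℕ => r * (r+1) * z ^ 2 * (rlcc (r+2) k * z ^ k))
      = fun k : ℕ => ((k+2 : ℕ) : ℝ) * (((k+2 : ℕ) : ℝ) - 1) * (rlcc r (k+2) * z ^ (k+2)) := by
    funext k
    have a := rlcc_succ' r (k+1)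
    rw [show k+1+1 = k+2 from rfl] at a
    have b := rlcc_succ' (r+1) k
    push_cast at a
    have hr2 : r + 1 + 1 = r + 2 := by ring
    rw [hr2] at b
    push_cast
    linear_combination (-(z^k * z^2 * ((k:ℝ)+1))) * a - (z^k*z^2*r) * b
  rw [he] at h
  have h2 := (hasSum_nat_add_iff (f := fun n : ℕ => (n:ℝ) * ((n:ℝ)-1) * (rlcc r n * z ^ n)) 2).mp h
  have hzero : ∑ n ∈ Finset.range 2, (n:ℝ) * ((n:ℝ)-1) * (rlcc r n * z ^ n) = 0 := by
    rw [Finset.sum_range_succ, Finset.sum_range_one]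
    norm_num
  rw [hzero, add_zero] at h2
  exact h2

lemma rl_integral (β φ ψ : ℝ) (hβ : 0 < β) (hβψ : 0 < β + ψ) (c : ℝ) :
    (∫ u in (c/β)..((c+1)/β), ((β*u+φ)/(β+ψ))^2)
      = ((c+1+φ)^3 - (c+φ)^3) / (3*β*(β+ψ)^2) := by
  have hderiv : ∀ u ∈ Set.uIcc (c/β) ((c+1)/β),
      HasDerivAt (fun u : ℝ => (β*u+φ)^3 / (3*β*(β+ψ)^2)) (((β*u+φ)/(β+ψ))^2) u := by
    intro u _
    have h1 : HasDerivAt (fun u : ℝ => β*u+φ) β u := by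
      simpa using ((hasDerivAt_id u).const_mul β).add_const φ
    have h2 := (h1.pow 3).div_const (3*β*(β+ψ)^2)
    convert h2 using 1
    · rfl
    · rfl
    · rfl
    field_simp
    ring
  have hint : IntervalIntegrable (fun u : ℝ => ((β*u+φ)/(β+ψ))^2) MeasureTheory.volume
      (c/β) ((c+1)/β) := by
    apply Continuous.intervalIntegrable
    exact (((continuous_const.mul continuous_id).add continuous_const).div_const _).pow 2
  rw [intervalIntegral.integral_eq_sub_of_hasDerivAt hderiv hint]
  field_simp

/-- Second moment: `RL_n^{[α]}(t²;x)`. -/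
theorem stmt_2 (x α β φ ψ : ℝ) (hx : 0 ≤ x) (hα : 0 < α) (hβ : 1 ≤ β)
    (hφ : 0 ≤ φ) (hψ : 0 ≤ ψ) :
    β * ∑' i : ℕ,
      (1 + β * α) ^ (-x / α) * ((α + 1 / β) ^ i)⁻¹ *
        ((∏ j ∈ Finset.range i, (x + (j : ℝ) * α)) / (i.factorial : ℝ)) *
        (∫ u in ((i : ℝ) / β)..(((i : ℝ) + 1) / β), ((β * u + φ) / (β + ψ)) ^ 2)
      = (1 + 3 * φ + 3 * φ ^ 2 + 6 * x * β + 6 * x * φ * β + 3 * α * x * β ^ 2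
          + 3 * x ^ 2 * β ^ 2) / (3 * (ψ + β) ^ 2) := by
  have hβ0 : (0:ℝ) < β := lt_of_lt_of_le one_pos hβ
  have hβψ : (0:ℝ) < β + ψ := by linarith
  have h1αβ : (0:ℝ) < 1 + α * β := by nlinarith
  set r : ℝ := x / α with hrdef
  set z : ℝ := α * β / (1 + α * β) with hzdef
  have hr : 0 ≤ r := div_nonneg hx hα.le
  have hz0 : 0 ≤ z := by rw [hzdef]; positivity
  have hz1 : z < 1 := by rw [hzdef, div_lt_one h1αβ]; linarith
  have h1z : 1 - z = (1 + α * β)⁻¹ := by rw [hzdef]; field_simp; ring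
  have hprod : ∀ i : ℕ, (∏ j ∈ Finset.range i, (x + (j:ℝ) * α))
      = α ^ i * ∏ j ∈ Finset.range i, (r + (j:ℝ)) := by
    intro i
    rw [show (∏ j ∈ Finset.range i, (x + (j:ℝ) * α)) = ∏ j ∈ Finset.range i, (α * (r + (j:ℝ)))
      from Finset.prod_congr rfl fun j _ => by
        rw [hrdef, mul_add, mul_div_cancel₀ x hα.ne']; ring]
    rw [Finset.prod_mul_distrib, Finset.prod_const, Finset.card_range]
  have hzpow : ∀ i : ℕ, ((α + 1/β) ^ i)⁻¹ * α ^ i = z ^ i := by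
    intro i
    have hq : α + 1/β ≠ 0 := by positivity
    have hz : α / (α + 1/β) = z := by rw [hzdef]; field_simp; ring
    rw [← hz, div_pow]
    ring
  have hterm : ∀ i : ℕ,
      (1 + β * α) ^ (-x / α) * ((α + 1 / β) ^ i)⁻¹ *
        ((∏ j ∈ Finset.range i, (x + (j : ℝ) * α)) / (i.factorial : ℝ)) *
        (∫ u in ((i : ℝ) / β)..(((i : ℝ) + 1) / β), ((β * u + φ) / (β + ψ)) ^ 2)
      = ((1 + β * α) ^ (-x / α) / (3*β*(β+ψ)^2)) *
        ((3 * ((i:ℝ) * ((i:ℝ) - 1)) + (6*φ+6) * (i:ℝ) + (3*φ^2+3*φ+1)) * (rlcc r i * z ^ i)) := by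
    intro i
    rw [rl_integral β φ ψ hβ0 hβψ (i:ℝ), hprod i, ← hzpow i]
    have hq : ((α + 1/β) ^ i) ≠ 0 := by positivity
    have hfact : ((i.factorial : ℕ) : ℝ) ≠ 0 := by positivity
    simp only [rlcc]
    field_simp
    ring
  rw [tsum_congr hterm]
  have H0 := rl_hasSum hr hz0 hz1
  have H1 := rl_hasSum1 hr hz0 hz1
  have H2 := rl_hasSum2 hr hz0 hz1
  have Hc := ((H2.mul_left 3).add (H1.mul_left (6*φ+6))).add (H0.mul_left (3*φ^2+3*φ+1))
  have Hc2 : HasSum (fun i : ℕ =>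
      (3 * ((i:ℝ) * ((i:ℝ) - 1)) + (6*φ+6) * (i:ℝ) + (3*φ^2+3*φ+1)) * (rlcc r i * z ^ i))
      (3 * (r * (r+1) * z ^ 2 * (1 - z) ^ (-(r+2))) + (6*φ+6) * (r * z * (1 - z) ^ (-(r+1)))
        + (3*φ^2+3*φ+1) * ((1 - z) ^ (-r))) := by
    convert Hc using 1
    · rfl
    funext i
    ring
  rw [(Hc2.mul_left ((1 + β * α) ^ (-x / α) / (3*β*(β+ψ)^2))).tsum_eq]
  have hA : (1 + β * α) ^ (-x / α) = ((1 + α * β) ^ r)⁻¹ := by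
    rw [show (1:ℝ) + β * α = 1 + α * β from by ring,
      show -x / α = -r from by rw [hrdef]; ring, Real.rpow_neg h1αβ.le]
  have hv0 : (1 - z) ^ (-r) = (1 + α * β) ^ r := by
    rw [h1z, Real.inv_rpow h1αβ.le, Real.rpow_neg h1αβ.le, inv_inv]
  have hv1 : (1 - z) ^ (-(r+1)) = (1 + α * β) ^ (r+1) := by
    rw [h1z, Real.inv_rpow h1αβ.le, Real.rpow_neg h1αβ.le, inv_inv]
  have hv2 : (1 - z) ^ (-(r+2)) = (1 + α * β) ^ (r+2) := by
    rw [h1z, Real.inv_rpow h1αβ.le, Real.rpow_neg h1αβ.le, inv_inv]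
  have e1 : (1 + α * β) ^ (r+1) = (1 + α * β) ^ r * (1 + α * β) :=
    Real.rpow_add_one h1αβ.ne' r
  have e2 : (1 + α * β) ^ (r+2) = (1 + α * β) ^ r * ((1 + α * β) * (1 + α * β)) := by
    rw [show r + 2 = (r+1)+1 from by ring, Real.rpow_add_one h1αβ.ne',
      Real.rpow_add_one h1αβ.ne']
    ring
  have hT : ((1 + α * β) ^ r) ≠ 0 := (Real.rpow_pos_of_pos h1αβ r).ne'
  rw [hA, hv0, hv1, hv2, e1, e2, hzdef, hrdef]
  rw [hrdef] at hT
  field_simp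
  ring
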